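/- For every x ∈ G, the R-equivalence class of x coincides with the T-orbit of x: { y ∈ X : x R y } = { T^{n}(x) : n ∈ ℤ }, where T^{n} denotes the n-th iterate of the bijection T : G → G (negative n using its inverse). -/

import Mathlib

open MeasureTheory ENNReal Filter

/-- The coordinate space: Lean index `n` is paper index `n+1`, so this is
`X_{n+1} = {0,1,…,5^{n+1}}`. -/
abbrev Xc (n : ℕ) : Type := Fin (5 ^ (n + 1) + 1)

/-- The weight of a point of `X_{n+1}`: `μ_{n+1}(0) = 1/2`, `μ_{n+1}(i) = 1/(2·5^{n+1})`
for `i ≠ 0`. -/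
noncomputable def w (n : ℕ) (a : Xc n) : ℝ≥0∞ :=
  if a = 0 then 1 / 2 else 1 / (2 * 5 ^ (n + 1))

/-- The full product space `X = ∏_{n ≥ 1} X_n`. -/
abbrev XX : Type := (n : ℕ) → Xc n

/-- The cylinder `Z_A` determined by a set `A` of configurations on a finite set `Γ`
of coordinates. -/
def cylSet (Γ : Finset ℕ) (A : Set ((i : Γ) → Xc i)) : Set XX :=
  {x | (fun i : Γ => x i) ∈ A}

/-- The point cylinder `Z_u`. -/
def cylPt (Γ : Finset ℕ) (u : (i : Γ) → Xc i) : Set XX := cylSet Γ {u}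

/-- `μ` is the product measure `⊗ μ_n` iff every point cylinder gets the product of the
weights of its coordinates. (This property determines the product measure uniquely.) -/
def IsProductMeasure (μ : Measure XX) : Prop :=
  ∀ (Γ : Finset ℕ) (u : (i : Γ) → Xc i), μ (cylPt Γ u) = ∏ i : Γ, w i (u i)

/-- `π_{n+1} : X_{n+1} → {0,1}`, sending `0` to `0` and everything else to `1`. -/
def par (n : ℕ) (a : Xc n) : ℕ := if a = 0 then 0 else 1

/-- The equivalence relation `R`: `x R y` iff for some `n ≥ 1` the coordinates of `x` and `y`
beyond the `n`-th agree, and the parities of `∑_{i=1}^{n} π_i(x_i)` and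
`∑_{i=1}^{n} π_i(y_i)` coincide. -/
def Rrel (x y : XX) : Prop :=
  ∃ n : ℕ, 1 ≤ n ∧ (∀ i, n ≤ i → x i = y i) ∧
    (∑ i ∈ Finset.range n, par i (x i)) % 2 = (∑ i ∈ Finset.range n, par i (y i)) % 2

/-- The conull set `G` of points with infinitely many non-maximal and infinitely many
non-zero coordinates of (paper) index `≥ 2` (Lean index `≥ 1`). -/
def G : Set XX :=
  {x | {i : ℕ | 1 ≤ i ∧ (x i : ℕ) < 5 ^ (i + 1)}.Infinite ∧
    {i : ℕ | 1 ≤ i ∧ x i ≠ 0}.Infinite}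

open Classical in
/-- The transformation `T`. If `x_1 ∈ {1,2,3,4}` (Lean coordinate `0`), it increments the
first coordinate. Otherwise (`x_1 ∈ {0,5}`), with `N(x)` the least (paper) index `≥ 2` with
`x_{N(x)} < 5^{N(x)}`, it sets the first coordinate to `a_x`, the coordinates strictly between
`1` and `N(x)` to `0`, increments the `N(x)`-th coordinate, and keeps the rest; here
`a_x ∈ {0,1}` has the parity of `π_1(x_1) + ⋯ + π_{N(x)}(x_{N(x)}) - 1`. On points where no
such `N(x)` exists (a null set), `T` is defined to be the identity. -/
noncomputable def T (x : XX) : XX :=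
  if 1 ≤ (x 0 : ℕ) ∧ (x 0 : ℕ) ≤ 4 then
    Function.update x 0 (x 0 + 1)
  else if h : ∃ i, 1 ≤ i ∧ (x i : ℕ) < 5 ^ (i + 1) then
    fun i =>
      if i = 0 then
        (⟨((∑ j ∈ Finset.range (Nat.find h + 1), par j (x j)) + 1) % 2, by
          have h2 : ((∑ j ∈ Finset.range (Nat.find h + 1), par j (x j)) + 1) % 2 < 2 :=
            Nat.mod_lt _ (by norm_num)
          have h3 : 1 ≤ 5 ^ (i + 1) := Nat.one_le_pow _ _ (by norm_num)
          omega⟩ : Xc i)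
      else if i < Nat.find h then 0
      else if hiN : i = Nat.find h then
        cast (congrArg Xc hiN).symm (x (Nat.find h) + 1)
      else x i
  else x
-- ===== auxiliary definitions and lemmas =====

def psum (z : XX) (n : ℕ) : ℕ := ∑ i ∈ Finset.range n, par i (z i)

def wt : ℕ → ℕ
  | 0 => 1
  | n + 1 => wt n * (5 ^ (n + 1) + 1)

lemma wt_pos (n : ℕ) : 0 < wt n := by
  induction n with
  | zero => simp [wt]
  | succ n ih => have : (0:ℕ) < 5 ^ (n+1) + 1 := by positivity
                 simpa [wt] using Nat.mul_pos ih this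

def V (z : XX) (n : ℕ) : ℕ := ∑ i ∈ Finset.range n, wt i * (z i : ℕ)

lemma par_le (i : ℕ) (a : Xc i) : par i a ≤ 1 := by
  unfold par; split <;> omega

lemma par_eq_val (i : ℕ) (a : Xc i) : par i a = if (a : ℕ) = 0 then 0 else 1 := by
  unfold par
  by_cases h : a = 0
  · simp [h]
  · rw [if_neg h, if_neg]
    exact fun h' => h (Fin.ext (by rw [h', Fin.val_zero]))

lemma par_ne_zero (i : ℕ) (a : Xc i) (h : (a : ℕ) ≠ 0) : par i a = 1 := by
  rw [par_eq_val, if_neg h]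

lemma par_zero' (i : ℕ) (a : Xc i) (h : (a : ℕ) = 0) : par i a = 0 := by
  rw [par_eq_val, if_pos h]

lemma sum_wt_le (z : XX) (N : ℕ) :
    ∑ i ∈ Finset.range N, wt i * (z i : ℕ) ≤ wt N - 1 := by
  induction N with
  | zero => simp
  | succ N ih =>
    rw [Finset.sum_range_succ]
    have h1 : (z N : ℕ) ≤ 5 ^ (N + 1) := Fin.is_le _
    have h2 : wt N * (z N : ℕ) ≤ wt N * 5 ^ (N + 1) := Nat.mul_le_mul_left _ h1
    have h3 : wt N * 5 ^ (N + 1) + wt N = wt (N + 1) := by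
      show _ = wt N * (5 ^ (N+1) + 1); ring
    have := wt_pos N
    omega

lemma psum_split (z : XX) {m n : ℕ} (h : m ≤ n) :
    psum z n = psum z m + ∑ i ∈ Finset.Ico m n, par i (z i) := by
  unfold psum
  rw [Finset.range_eq_Ico,
    ← Finset.sum_Ico_consecutive _ (Nat.zero_le m) h]
  rw [Finset.range_eq_Ico]

lemma V_split (z : XX) {m n : ℕ} (h : m ≤ n) :
    V z n = V z m + ∑ i ∈ Finset.Ico m n, wt i * (z i : ℕ) := by
  unfold V
  rw [Finset.range_eq_Ico,
    ← Finset.sum_Ico_consecutive _ (Nat.zero_le m) h]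
  rw [Finset.range_eq_Ico]

lemma T_incr (z : XX) (h1 : 1 ≤ (z 0 : ℕ)) (h4 : (z 0 : ℕ) ≤ 4) :
    T z = Function.update z 0 (z 0 + 1) := by
  unfold T; rw [if_pos ⟨h1, h4⟩]

lemma val_add_one {n : ℕ} (a : Fin (n + 1)) (h : (a : ℕ) < n) : ((a + 1 : Fin (n+1)) : ℕ) = (a : ℕ) + 1 := by
  have : (a : ℕ) + 1 < n + 1 := by omega
  simp [Fin.add_def, Nat.mod_eq_of_lt this]

lemma T_carry (z : XX) (hz0 : ¬(1 ≤ (z 0 : ℕ) ∧ (z 0 : ℕ) ≤ 4))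
    (h : ∃ i, 1 ≤ i ∧ (z i : ℕ) < 5 ^ (i + 1)) :
    ((T z 0 : ℕ) = (psum z (Nat.find h + 1) + 1) % 2) ∧
    (∀ i, i ≠ 0 → i < Nat.find h → T z i = 0) ∧
    ((T z (Nat.find h) : ℕ) = (z (Nat.find h) : ℕ) + 1) ∧
    (∀ i, Nat.find h < i → T z i = z i) := by
  have hT : ∀ i, T z i = (fun i =>
      if i = 0 then
        (⟨((∑ j ∈ Finset.range (Nat.find h + 1), par j (z j)) + 1) % 2, by
          have h2 : ((∑ j ∈ Finset.range (Nat.find h + 1), par j (z j)) + 1) % 2 < 2 :=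
            Nat.mod_lt _ (by norm_num)
          have h3 : 1 ≤ 5 ^ (i + 1) := Nat.one_le_pow _ _ (by norm_num)
          omega⟩ : Xc i)
      else if i < Nat.find h then 0
      else if hiN : i = Nat.find h then
        cast (congrArg Xc hiN).symm (z (Nat.find h) + 1)
      else z i) i := by
    intro i
    unfold T
    rw [if_neg hz0, dif_pos h]
  have hfind := Nat.find_spec h
  refine ⟨?_, ?_, ?_, ?_⟩
  · rw [hT 0]; rfl
  · intro i hi0 hilt
    rw [hT i]
    simp only [if_neg hi0, if_pos hilt]
  · rw [hT (Nat.find h)]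
    have hne : Nat.find h ≠ 0 := by omega
    simp only [if_neg hne, lt_irrefl, if_false, dif_pos rfl, cast_eq]
    exact val_add_one _ hfind.2
  · intro i hi
    rw [hT i]
    have h0 : i ≠ 0 := by omega
    have h1 : ¬ i < Nat.find h := by omega
    have h2 : i ≠ Nat.find h := by omega
    simp only [if_neg h0, if_neg h1, dif_neg h2]
lemma Rrel_def' (x y : XX) : Rrel x y ↔
    ∃ n : ℕ, 1 ≤ n ∧ (∀ i, n ≤ i → x i = y i) ∧ psum x n % 2 = psum y n % 2 := Iff.rfl

lemma psum_ext (a b : XX) {m n : ℕ} (hmn : m ≤ n) (hag : ∀ i, m ≤ i → a i = b i)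
    (hp : psum a m % 2 = psum b m % 2) : psum a n % 2 = psum b n % 2 := by
  rw [psum_split a hmn, psum_split b hmn]
  have : ∑ i ∈ Finset.Ico m n, par i (a i) = ∑ i ∈ Finset.Ico m n, par i (b i) := by
    apply Finset.sum_congr rfl
    intro i hi
    rw [hag i (Finset.mem_Ico.mp hi).1]
  omega

lemma Rrel_refl (x : XX) : Rrel x x := ⟨1, le_refl _, fun _ _ => rfl, rfl⟩

lemma Rrel_symm {x y : XX} (h : Rrel x y) : Rrel y x := by
  obtain ⟨n, hn, hag, hp⟩ := h
  exact ⟨n, hn, fun i hi => (hag i hi).symm, hp.symm⟩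

lemma Rrel_trans {x y z : XX} (h1 : Rrel x y) (h2 : Rrel y z) : Rrel x z := by
  obtain ⟨n1, hn1, hag1, hp1⟩ := h1
  obtain ⟨n2, hn2, hag2, hp2⟩ := h2
  refine ⟨max n1 n2, le_trans hn1 (le_max_left _ _), ?_, ?_⟩
  · intro i hi
    rw [hag1 i (le_trans (le_max_left _ _) hi), hag2 i (le_trans (le_max_right _ _) hi)]
  · have hp1' : psum x n1 % 2 = psum y n1 % 2 := hp1
    have hp2' : psum y n2 % 2 = psum z n2 % 2 := hp2
    have e1 := psum_ext x y (le_max_left n1 n2) hag1 hp1'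
    have e2 := psum_ext y z (le_max_right n1 n2) hag2 hp2'
    show psum x (max n1 n2) % 2 = psum z (max n1 n2) % 2
    omega

lemma mem_G_of_agree {z : XX} (hz : z ∈ G) (z' : XX) (n : ℕ)
    (hag : ∀ i, n ≤ i → z' i = z i) : z' ∈ G := by
  obtain ⟨h1, h2⟩ := hz
  constructor
  · apply Set.Infinite.mono (s := {i : ℕ | 1 ≤ i ∧ (z i : ℕ) < 5 ^ (i+1)} \ Set.Iio n)
    · intro i hi
      obtain ⟨⟨hi1, hi2⟩, hi3⟩ := hi
      simp only [Set.mem_Iio, not_lt] at hi3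
      exact ⟨hi1, by rw [hag i hi3]; exact hi2⟩
    · exact Set.Infinite.diff h1 (Set.finite_Iio n)
  · apply Set.Infinite.mono (s := {i : ℕ | 1 ≤ i ∧ z i ≠ 0} \ Set.Iio n)
    · intro i hi
      obtain ⟨⟨hi1, hi2⟩, hi3⟩ := hi
      simp only [Set.mem_Iio, not_lt] at hi3
      exact ⟨hi1, by rw [hag i hi3]; exact hi2⟩
    · exact Set.Infinite.diff h2 (Set.finite_Iio n)

lemma G_carry {z : XX} (hz : z ∈ G) : ∃ i, 1 ≤ i ∧ (z i : ℕ) < 5 ^ (i + 1) := by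
  obtain ⟨i, hi⟩ := hz.1.nonempty
  exact ⟨i, hi⟩

/-- `T` maps every point of `G` into its `R`-class. -/
lemma Rrel_T {z : XX} (hz : z ∈ G) : Rrel z (T z) := by
  by_cases hz0 : 1 ≤ (z 0 : ℕ) ∧ (z 0 : ℕ) ≤ 4
  · rw [T_incr z hz0.1 hz0.2]
    refine ⟨1, le_refl _, ?_, ?_⟩
    · intro i hi
      rw [Function.update_of_ne (by omega) _ z]
    · have hv : ((z 0 + 1 : Xc 0) : ℕ) = (z 0 : ℕ) + 1 := val_add_one _ (by omega)
      show psum z 1 % 2 = psum (Function.update z 0 (z 0 + 1)) 1 % 2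
      unfold psum
      simp only [Finset.sum_range_one, Function.update_self]
      rw [par_ne_zero _ _ (by omega), par_ne_zero _ _ (by omega)]
  · have h := G_carry hz
    obtain ⟨hc0, hcmid, hcN, hctail⟩ := T_carry z hz0 h
    set N := Nat.find h with hN
    have hN1 : 1 ≤ N := (Nat.find_spec h).1
    refine ⟨N + 1, by omega, ?_, ?_⟩
    · intro i hi
      exact (hctail i (by omega)).symm
    · have hTz : psum (T z) (N + 1) % 2 = psum z (N + 1) % 2 := by
        have hsplit : psum (T z) (N + 1) = psum (T z) 1 +
            (∑ i ∈ Finset.Ico 1 N, par i (T z i)) + par N (T z N) := by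
          have e1 : psum (T z) (N + 1) = psum (T z) N + par N (T z N) :=
            Finset.sum_range_succ _ _
          rw [e1, psum_split (T z) (show 1 ≤ N by omega)]
        have hmid : ∑ i ∈ Finset.Ico 1 N, par i (T z i) = 0 := by
          apply Finset.sum_eq_zero
          intro i hi
          obtain ⟨hi1, hi2⟩ := Finset.mem_Ico.mp hi
          rw [hcmid i (by omega) hi2]
          simp [par]
        have hb : par 0 (T z 0) = (psum z (N+1) + 1) % 2 := by
          rw [par_eq_val, hc0]
          have : (psum z (N+1) + 1) % 2 < 2 := Nat.mod_lt _ (by norm_num)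
          interval_cases h2 : (psum z (N+1) + 1) % 2 <;> simp
        have hN' : par N (T z N) = 1 := par_ne_zero _ _ (by omega)
        have h1 : psum (T z) 1 = par 0 (T z 0) := by
          unfold psum; rw [Finset.sum_range_one]
        rw [hsplit, hmid, h1, hb, hN']
        omega
      show psum z (N+1) % 2 = psum (T z) (N+1) % 2
      omega
lemma five_le (i : ℕ) : 5 ≤ 5 ^ (i + 1) := by
  calc (5:ℕ) = 5 ^ 1 := by norm_num
  _ ≤ 5 ^ (i + 1) := Nat.pow_le_pow_right (by norm_num) (by omega)

/-- The minimal point of the class of `x` within the level-`n` cylinder of `x`. -/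
noncomputable def mpt (x : XX) (n : ℕ) : XX := fun i =>
  ⟨if i = 0 then psum x n % 2 else if i < n then 0 else (x i : ℕ), by
    have h5 := five_le i
    split_ifs with h1 h2
    · have := Nat.mod_lt (psum x n) (show 0 < 2 by norm_num); omega
    · omega
    · exact (x i).is_lt⟩

lemma mpt_val (x : XX) (n i : ℕ) :
    ((mpt x n i : ℕ)) = if i = 0 then psum x n % 2 else if i < n then 0 else (x i : ℕ) := rfl

lemma mpt_tail (x : XX) {n : ℕ} (hn : 1 ≤ n) {i : ℕ} (h : n ≤ i) : mpt x n i = x i := by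
  apply Fin.ext
  rw [mpt_val, if_neg (by omega), if_neg (by omega)]

/-- The preimage of a point under a carry at level `N`. -/
noncomputable def zp (z : XX) (N : ℕ) (c : ℕ) : XX := fun i =>
  ⟨if i = 0 then c % 6 else if i < N then 5 ^ (i + 1) else if i = N then (z N : ℕ) - 1
      else (z i : ℕ), by
    have h5 := five_le i
    split_ifs with h1 h2 h3
    · have := Nat.mod_lt c (show 0 < 6 by norm_num); omega
    · omega
    · subst h3; have := (z i).is_le; omega
    · exact (z i).is_lt⟩

lemma zp_val (z : XX) (N c i : ℕ) :
    ((zp z N c i : ℕ)) = if i = 0 then c % 6 else if i < N then 5 ^ (i + 1)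
      else if i = N then (z N : ℕ) - 1 else (z i : ℕ) := rfl
lemma reach (e : Equiv.Perm G) (he : ∀ g : G, ((e g : G) : XX) = T (g : XX))
    (x : XX) (hx : x ∈ G) (n : ℕ) (hn : 1 ≤ n) (hm : mpt x n ∈ G) :
    ∀ k : ℕ, ∀ z : XX, V z n ≤ k → (∀ i, n ≤ i → z i = x i) →
      psum z n % 2 = psum x n % 2 →
      ∃ (j : ℕ) (hzG : z ∈ G), (e ^ j) ⟨mpt x n, hm⟩ = ⟨z, hzG⟩ := by
  intro k
  induction k using Nat.strong_induction_on with
  | _ k IH =>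
  intro z hVk hag hp
  have hzG : z ∈ G := mem_G_of_agree hx z n (fun i hi => hag i hi)
  by_cases hzm : z = mpt x n
  · refine ⟨0, hzG, ?_⟩
    apply Subtype.ext
    simp [hzm]
  -- We construct a `T`-preimage `z'` of `z` inside the cylinder, with smaller `V`-value.
  suffices hsuf : ∃ z', T z' = z ∧ (∀ i, n ≤ i → z' i = x i) ∧
      psum z' n % 2 = psum x n % 2 ∧ V z' n < V z n by
    obtain ⟨z', hTz', hagz', hpz', hVz'⟩ := hsuf
    obtain ⟨j, hz'G, hej⟩ := IH (V z' n) (by omega) z' le_rfl hagz' hpz'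
    refine ⟨j + 1, hzG, ?_⟩
    have hstep : (e ^ (j + 1)) ⟨mpt x n, hm⟩ = e ((e ^ j) ⟨mpt x n, hm⟩) := by
      rw [pow_succ']; rfl
    rw [hstep, hej]
    apply Subtype.ext
    rw [he ⟨z', hz'G⟩]
    exact hTz'
  by_cases hz2 : 2 ≤ (z 0 : ℕ)
  · -- Case A : decrement the first coordinate.
    have hle5 : (z 0 : ℕ) ≤ 5 := (z 0).is_le
    refine ⟨Function.update z 0 (⟨(z 0 : ℕ) - 1, by have := (z 0).is_lt; omega⟩ : Xc 0),
      ?_, ?_, ?_, ?_⟩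
    · set z' := Function.update z 0 (⟨(z 0 : ℕ) - 1, by have := (z 0).is_lt; omega⟩ : Xc 0)
        with hz'
      have hz'0 : (z' 0 : ℕ) = (z 0 : ℕ) - 1 := by rw [hz', Function.update_self]
      rw [T_incr z' (by omega) (by omega)]
      funext i
      by_cases hi : i = 0
      · subst hi
        rw [Function.update_self]
        apply Fin.ext
        rw [val_add_one _ (by rw [hz'0]; omega), hz'0]
        omega
      · rw [Function.update_of_ne hi, hz', Function.update_of_ne hi]
    · intro i hi
      rw [Function.update_of_ne (by omega), hag i hi]
    · have : psum (Function.update z 0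
          (⟨(z 0 : ℕ) - 1, by have := (z 0).is_lt; omega⟩ : Xc 0)) n = psum z n := by
        unfold psum
        apply Finset.sum_congr rfl
        intro i _
        by_cases hi : i = 0
        · subst hi
          rw [Function.update_self, par_ne_zero _ _ (by show (z 0 : ℕ) - 1 ≠ 0; omega),
            par_ne_zero _ _ (by omega)]
        · rw [Function.update_of_ne hi]
      omega
    · apply Finset.sum_lt_sum
      · intro i _
        by_cases hi : i = 0
        · subst hi
          rw [Function.update_self]
          apply Nat.mul_le_mul_left
          show (z 0 : ℕ) - 1 ≤ (z 0 : ℕ)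
          omega
        · rw [Function.update_of_ne hi]
      · refine ⟨0, Finset.mem_range.mpr (by omega), ?_⟩
        rw [Function.update_self]
        have hw0 : wt 0 = 1 := rfl
        rw [hw0, one_mul, one_mul]
        show (z 0 : ℕ) - 1 < (z 0 : ℕ)
        omega
  · -- Case B : first coordinate is 0 or 1; carry preimage.
    have hz01 : (z 0 : ℕ) ≤ 1 := by omega
    by_cases hex : ∃ i, 1 ≤ i ∧ i < n ∧ z i ≠ 0
    · set N := Nat.find hex with hNdef
      obtain ⟨hN1, hNn, hNne⟩ := Nat.find_spec hex
      have hmin : ∀ i, 1 ≤ i → i < N → z i = 0 := by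
        intro i h1 h2
        have := Nat.find_min hex (m := i) h2
        push_neg at this
        exact this h1 (by omega)
      have hzN1 : 1 ≤ (z N : ℕ) := by
        rcases Nat.eq_zero_or_pos (z N : ℕ) with h | h
        · exact absurd (Fin.ext (by simpa using h)) hNne
        · omega
      have hzNle : (z N : ℕ) ≤ 5 ^ (N + 1) := (z N).is_le
      obtain ⟨p, hpdef⟩ : ∃ q : ℕ, q = if (z N : ℕ) - 1 = 0 then 0 else 1 := ⟨_, rfl⟩
      have hple : p ≤ 1 := by rw [hpdef]; split <;> omega
      obtain ⟨tgt, htgt⟩ : ∃ q : ℕ, q = ((z 0 : ℕ) + 1 + (N - 1) + p) % 2 := ⟨_, rfl⟩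
      have htgt1 : tgt ≤ 1 := by omega
      obtain ⟨c, hcdef⟩ : ∃ q : ℕ, q = if tgt = 0 then 0 else 5 := ⟨_, rfl⟩
      have hc6 : c % 6 = c := by rw [hcdef]; split <;> norm_num
      obtain ⟨z', hz'def⟩ : ∃ q : XX, q = zp z N c := ⟨_, rfl⟩
      have hz'0 : (z' 0 : ℕ) = c := by rw [hz'def, zp_val, if_pos rfl, hc6]
      have hz'mid : ∀ i, 1 ≤ i → i < N → (z' i : ℕ) = 5 ^ (i + 1) := by
        intro i h1 h2
        rw [hz'def, zp_val, if_neg (by omega), if_pos h2]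
      have hz'N : (z' N : ℕ) = (z N : ℕ) - 1 := by
        rw [hz'def, zp_val, if_neg (by omega), if_neg (by omega), if_pos rfl]
      have hz'tail : ∀ i, N < i → z' i = z i := by
        intro i hi
        apply Fin.ext
        rw [hz'def, zp_val, if_neg (by omega), if_neg (by omega), if_neg (by omega)]
      have hnot : ¬(1 ≤ (z' 0 : ℕ) ∧ (z' 0 : ℕ) ≤ 4) := by
        rw [hz'0, hcdef]; split <;> omega
      have hex' : ∃ i, 1 ≤ i ∧ (z' i : ℕ) < 5 ^ (i + 1) := by
        refine ⟨N, hN1, ?_⟩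
        rw [hz'N]
        have := five_le N
        omega
      have hfind : Nat.find hex' = N := by
        rw [Nat.find_eq_iff]
        refine ⟨⟨hN1, by rw [hz'N]; have := five_le N; omega⟩, ?_⟩
        rintro m hm ⟨hm1, hm2⟩
        rw [hz'mid m hm1 hm] at hm2
        omega
      obtain ⟨c0, cmid, cN, ctail⟩ := T_carry z' hnot hex'
      rw [hfind] at c0 cmid cN ctail
      -- parity of the first coordinate of `z'`
      have hpar0 : par 0 (z' 0) = tgt := by
        rw [par_eq_val, hz'0, hcdef]
        interval_cases tgt
        · norm_num
        · norm_num
      have hparmid : ∀ i, 1 ≤ i → i < N → par i (z' i) = 1 := by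
        intro i h1 h2
        apply par_ne_zero
        rw [hz'mid i h1 h2]
        have := five_le i
        omega
      have hparN : par N (z' N) = p := by
        rw [par_eq_val, hz'N, hpdef]
      -- the partial parity sum of `z'` up to `N+1`
      have hpsz' : psum z' (N + 1) = tgt + (N - 1) + p := by
        have e1 : psum z' (N + 1) = psum z' N + par N (z' N) := Finset.sum_range_succ _ _
        have e2 : psum z' N = psum z' 1 + ∑ i ∈ Finset.Ico 1 N, par i (z' i) :=
          psum_split z' hN1
        have e3 : psum z' 1 = par 0 (z' 0) := Finset.sum_range_one _
        have e4 : ∑ i ∈ Finset.Ico 1 N, par i (z' i) = N - 1 := by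
          rw [Finset.sum_congr rfl (fun i hi => by
            obtain ⟨h1, h2⟩ := Finset.mem_Ico.mp hi
            exact hparmid i h1 h2), Finset.sum_const, Nat.card_Ico, smul_eq_mul, mul_one]
        rw [e1, e2, e3, e4, hpar0, hparN]
      have hc0' : (T z' 0 : ℕ) = (z 0 : ℕ) := by
        rw [c0, hpsz']
        omega
      have hTz' : T z' = z := by
        funext i
        rcases Nat.eq_zero_or_pos i with hi0 | hi0
        · subst hi0; exact Fin.ext hc0'
        · rcases lt_trichotomy i N with hiN | hiN | hiN
          · rw [cmid i (by omega) hiN, hmin i hi0 hiN]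
          · subst hiN
            apply Fin.ext
            rw [cN, hz'N]
            omega
          · rw [ctail i hiN, hz'tail i hiN]
      refine ⟨z', hTz', ?_, ?_, ?_⟩
      · intro i hi
        rw [hz'tail i (by omega), hag i hi]
      · -- parity of `z'` matches
        have s1 : psum z' n = psum z' (N + 1) + ∑ i ∈ Finset.Ico (N+1) n, par i (z' i) :=
          psum_split z' (by omega)
        have s2 : psum z n = psum z (N + 1) + ∑ i ∈ Finset.Ico (N+1) n, par i (z i) :=
          psum_split z (by omega)
        have s3 : ∑ i ∈ Finset.Ico (N+1) n, par i (z' i) =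
            ∑ i ∈ Finset.Ico (N+1) n, par i (z i) := by
          apply Finset.sum_congr rfl
          intro i hi
          have hii := (Finset.mem_Ico.mp hi).1
          rw [hz'tail i (by omega)]
        have s4 : psum z (N + 1) = (z 0 : ℕ) + 1 := by
          have e1 : psum z (N + 1) = psum z N + par N (z N) := Finset.sum_range_succ _ _
          have e2 : psum z N = psum z 1 + ∑ i ∈ Finset.Ico 1 N, par i (z i) :=
            psum_split z hN1
          have e3 : psum z 1 = par 0 (z 0) := Finset.sum_range_one _
          have e4 : ∑ i ∈ Finset.Ico 1 N, par i (z i) = 0 := by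
            apply Finset.sum_eq_zero
            intro i hi
            obtain ⟨h1, h2⟩ := Finset.mem_Ico.mp hi
            rw [hmin i h1 h2]
            simp [par]
          have e5 : par 0 (z 0) = (z 0 : ℕ) := by
            rw [par_eq_val]; split <;> omega
          rw [e1, e2, e3, e4, e5, par_ne_zero _ _ (by omega)]
        omega
      · -- the `V`-value strictly decreases
        have v1 : V z' n = V z' (N + 1) + ∑ i ∈ Finset.Ico (N+1) n, wt i * (z' i : ℕ) :=
          V_split z' (by omega)
        have v2 : V z n = V z (N + 1) + ∑ i ∈ Finset.Ico (N+1) n, wt i * (z i : ℕ) :=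
          V_split z (by omega)
        have v3 : ∑ i ∈ Finset.Ico (N+1) n, wt i * (z' i : ℕ) =
            ∑ i ∈ Finset.Ico (N+1) n, wt i * (z i : ℕ) := by
          apply Finset.sum_congr rfl
          intro i hi
          have hii := (Finset.mem_Ico.mp hi).1
          rw [hz'tail i (by omega)]
        have v4 : V z' (N + 1) = V z' N + wt N * ((z N : ℕ) - 1) := by
          have := Finset.sum_range_succ (fun i => wt i * (z' i : ℕ)) N
          rw [show V z' (N+1) = ∑ i ∈ Finset.range (N+1), wt i * (z' i : ℕ) from rfl, this,
            hz'N]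
          rfl
        have v5 : V z' N ≤ wt N - 1 := sum_wt_le z' N
        have v6 : V z (N + 1) = V z N + wt N * (z N : ℕ) :=
          Finset.sum_range_succ (fun i => wt i * (z i : ℕ)) N
        have v7 : wt N * (z N : ℕ) = wt N * ((z N : ℕ) - 1) + wt N := by
          have : ((z N : ℕ) - 1) + 1 = (z N : ℕ) := by omega
          calc wt N * (z N : ℕ) = wt N * (((z N : ℕ) - 1) + 1) := by rw [this]
          _ = wt N * ((z N : ℕ) - 1) + wt N := by ring
        have := wt_pos N
        omega
    · -- no nonzero coordinate in `[1, n)` : `z` is the minimal point, contradiction.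
      exfalso
      apply hzm
      push_neg at hex
      have hzero : ∀ i, 1 ≤ i → i < n → z i = 0 := fun i h1 h2 => hex i h1 h2
      have hps : psum z n = (z 0 : ℕ) := by
        have e2 : psum z n = psum z 1 + ∑ i ∈ Finset.Ico 1 n, par i (z i) :=
          psum_split z hn
        have e3 : psum z 1 = par 0 (z 0) := Finset.sum_range_one _
        have e4 : ∑ i ∈ Finset.Ico 1 n, par i (z i) = 0 := by
          apply Finset.sum_eq_zero
          intro i hi
          obtain ⟨h1, h2⟩ := Finset.mem_Ico.mp hi
          rw [hzero i h1 h2]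
          simp [par]
        have e5 : par 0 (z 0) = (z 0 : ℕ) := by
          rw [par_eq_val]; split <;> omega
        rw [e2, e3, e4, e5]
        omega
      funext i
      rcases Nat.eq_zero_or_pos i with hi0 | hi0
      · subst hi0
        apply Fin.ext
        rw [mpt_val, if_pos rfl]
        omega
      · by_cases hin : i < n
        · rw [hzero i hi0 hin]
          apply Fin.ext
          rw [mpt_val, if_neg (by omega), if_pos hin]
          rfl
        · rw [hag i (by omega), mpt_tail x hn (by omega)]
lemma orbit_sub (e : Equiv.Perm G) (he : ∀ g : G, ((e g : G) : XX) = T (g : XX))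
    (x : G) : ∀ k : ℤ, Rrel (x : XX) (((e ^ k) x : G) : XX) := by
  intro k
  induction k using Int.induction_on with
  | zero => simpa using Rrel_refl (x : XX)
  | succ n ih =>
    have hstep : Rrel (((e ^ (n : ℤ)) x : G) : XX) (((e ^ ((n : ℤ) + 1)) x : G) : XX) := by
      have h1 : (e ^ ((n : ℤ) + 1)) x = e ((e ^ (n : ℤ)) x) := by
        rw [show (n : ℤ) + 1 = 1 + (n : ℤ) by ring, zpow_one_add]
        rfl
      rw [h1, he]
      exact Rrel_T ((e ^ (n : ℤ)) x).2
    exact Rrel_trans ih hstep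
  | pred n ih =>
    have hstep : Rrel (((e ^ (-(n : ℤ) - 1)) x : G) : XX) (((e ^ (-(n : ℤ))) x : G) : XX) := by
      have hmul : e * e ^ (-(n : ℤ) - 1) = e ^ (-(n : ℤ)) := by
        rw [← zpow_one_add]
        congr 1
        ring
      have h1 : (e ^ (-(n : ℤ))) x = e ((e ^ (-(n : ℤ) - 1)) x) := by
        rw [← hmul]
        rfl
      rw [h1, he]
      exact Rrel_T ((e ^ (-(n : ℤ) - 1)) x).2
    exact Rrel_trans ih (Rrel_symm hstep)
theorem statement13 (e : Equiv.Perm G) (he : ∀ g : G, ((e g : G) : XX) = T (g : XX))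
    (x : G) :
    {y : XX | Rrel (x : XX) y} = Set.range (fun n : ℤ => (((e ^ n) x : G) : XX)) := by
  ext y
  simp only [Set.mem_setOf_eq, Set.mem_range]
  constructor
  · intro hR
    obtain ⟨n, hn, hag, hp⟩ := hR
    have hp' : psum (x : XX) n % 2 = psum y n % 2 := hp
    have hxG : (x : XX) ∈ G := x.2
    have hmG : mpt (x : XX) n ∈ G :=
      mem_G_of_agree hxG _ n (fun i hi => mpt_tail (x : XX) hn hi)
    obtain ⟨jx, hxG2, hjx⟩ := reach e he (x : XX) hxG n hn hmG (V (x : XX) n) (x : XX)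
      le_rfl (fun _ _ => rfl) rfl
    obtain ⟨jy, hyG2, hjy⟩ := reach e he (x : XX) hxG n hn hmG (V y n) y
      le_rfl (fun i hi => (hag i hi).symm) (by omega)
    have hxx : (⟨(x : XX), hxG2⟩ : G) = x := Subtype.ext rfl
    rw [hxx] at hjx
    refine ⟨(jy : ℤ) - (jx : ℤ), ?_⟩
    have hinv : ((e ^ jx)⁻¹ : Equiv.Perm G) x = ⟨mpt (x : XX) n, hmG⟩ := by
      have h2 := congrArg (fun g : G => ((e ^ jx)⁻¹ : Equiv.Perm G) g) hjx
      simpa using h2.symm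
    have h1 : (e ^ ((jy : ℤ) - (jx : ℤ))) x = ⟨y, hyG2⟩ := by
      rw [zpow_sub, Equiv.Perm.mul_apply, zpow_natCast, zpow_natCast, hinv, hjy]
    rw [h1]
  · rintro ⟨k, rfl⟩
    exact orbit_sub e he x k
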